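/- arXiv:2501.08664 — 3 statements merged into one kernel-verified Lean document; each statement's English description precedes it below -/
import Mathlib

section
/- Let Π be a finite multiset of rankings over C with |C| = n, and let π₀ be the ranking represented by the acyclic matrix X₀. Then π₀ is a Kemeny ranking for Π (a minimizer over all rankings of the cumulative Kendall tau distance to Π) if and only if X₀ minimizes the cost function C(X) = ∑_{i<j} b_{ij} x_{ij} over all acyclic strictly upper triangular binary matrices X, where b_{ij} = w_{ji} - w_{ij} and w_{ij} is the number of rankings in Π preferring c_i to c_j. -/
def KTdist (n : ℕ) (σ τ : Equiv.Perm (Fin n)) : ℕ :=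
  (Finset.univ.filter (fun p : Fin n × Fin n =>
    p.1 < p.2 ∧ ¬((σ p.1 < σ p.2) ↔ (τ p.1 < τ p.2)))).card

def wMat (n : ℕ) (Ps : Multiset (Equiv.Perm (Fin n))) (i j : Fin n) : ℕ :=
  (Ps.filter (fun σ => σ i < σ j)).card

def biasMat (n : ℕ) (Ps : Multiset (Equiv.Perm (Fin n))) (i j : Fin n) : ℤ :=
  (wMat n Ps j i : ℤ) - (wMat n Ps i j : ℤ)

/-- The linear cost `C(X) = ∑_{i<j} b_{ij} x_{ij}`. -/
def linCost (n : ℕ) (Ps : Multiset (Equiv.Perm (Fin n))) (X : Fin n → Fin n → Bool) : ℤ :=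
  ∑ p ∈ Finset.univ.filter (fun p : Fin n × Fin n => p.1 < p.2),
    biasMat n Ps p.1 p.2 * (if X p.1 p.2 = true then 1 else 0)

/-- Strictly upper triangular and acyclic (no cyclic inconsistency in either direction). -/
def AcyclicSUT (n : ℕ) (X : Fin n → Fin n → Bool) : Prop :=
  (∀ i j : Fin n, ¬ i < j → X i j = false) ∧
  (∀ i j k : Fin n, i < j → j < k →
    ¬((X i j = true ∧ X j k = true ∧ X i k = false) ∨
      (X i j = false ∧ X j k = false ∧ X i k = true)))



namespace Stmt3Aux

/-- The strict "before" relation induced by an acyclic SUT matrix. -/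
def rel {n : ℕ} (X : Fin n → Fin n → Bool) (i j : Fin n) : Prop :=
  (i < j ∧ X i j = true) ∨ (j < i ∧ X j i = false)

instance {n : ℕ} (X : Fin n → Fin n → Bool) (j : Fin n) :
    DecidablePred (fun i => rel X i j) := fun i => by unfold rel; infer_instance

lemma rel_irrefl {n : ℕ} (X : Fin n → Fin n → Bool) (i : Fin n) : ¬ rel X i i := by
  rintro (⟨h, -⟩ | ⟨h, -⟩) <;> exact lt_irrefl _ h

lemma rel_total {n : ℕ} (X : Fin n → Fin n → Bool) {i j : Fin n} (h : i ≠ j) :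
    rel X i j ∨ rel X j i := by
  rcases lt_or_gt_of_ne h with hlt | hlt
  · rcases Bool.eq_false_or_eq_true (X i j) with hx | hx
    · exact Or.inl (Or.inl ⟨hlt, hx⟩)
    · exact Or.inr (Or.inr ⟨hlt, hx⟩)
  · rcases Bool.eq_false_or_eq_true (X j i) with hx | hx
    · exact Or.inr (Or.inl ⟨hlt, hx⟩)
    · exact Or.inl (Or.inr ⟨hlt, hx⟩)

lemma rel_trans {n : ℕ} {X : Fin n → Fin n → Bool} (h : AcyclicSUT n X)
    {i j k : Fin n} (hij : rel X i j) (hjk : rel X j k) : rel X i k := by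
  obtain ⟨-, h2⟩ := h
  rcases hij with ⟨hij, hx⟩ | ⟨hij, hx⟩ <;> rcases hjk with ⟨hjk, hy⟩ | ⟨hjk, hy⟩
  · -- i<j, Xij=T ; j<k, Xjk=T
    refine Or.inl ⟨hij.trans hjk, ?_⟩
    by_contra hc
    exact h2 i j k hij hjk (Or.inl ⟨hx, hy, by simpa using hc⟩)
  · -- i<j, Xij=T ; k<j, Xkj=F
    rcases lt_trichotomy i k with hik | hik | hik
    · refine Or.inl ⟨hik, ?_⟩
      by_contra hc
      exact h2 i k j hik hjk (Or.inr ⟨by simpa using hc, hy, hx⟩)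
    · subst hik; rw [hx] at hy; exact absurd hy (by simp)
    · refine Or.inr ⟨hik, ?_⟩
      by_contra hc
      exact h2 k i j hik hij (Or.inl ⟨by simpa using hc, hx, hy⟩)
  · -- j<i, Xji=F ; j<k, Xjk=T
    rcases lt_trichotomy i k with hik | hik | hik
    · refine Or.inl ⟨hik, ?_⟩
      by_contra hc
      exact h2 j i k hij hik (Or.inr ⟨hx, by simpa using hc, hy⟩)
    · subst hik; rw [hx] at hy; exact absurd hy (by simp)
    · refine Or.inr ⟨hik, ?_⟩
      by_contra hc
      exact h2 j k i hjk hik (Or.inl ⟨hy, by simpa using hc, hx⟩)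
  · -- j<i, Xji=F ; k<j, Xkj=F
    refine Or.inr ⟨hjk.trans hij, ?_⟩
    by_contra hc
    exact h2 k j i hjk hij (Or.inr ⟨hy, hx, by simpa using hc⟩)

/-- Rank of `i` under `rel X`. -/
def rnk {n : ℕ} (X : Fin n → Fin n → Bool) (i : Fin n) : ℕ :=
  (Finset.univ.filter (fun k => rel X k i)).card

lemma rnk_lt {n : ℕ} (X : Fin n → Fin n → Bool) (i : Fin n) : rnk X i < n := by
  have h : (Finset.univ.filter (fun k => rel X k i)) ⊂ Finset.univ := by
    refine ⟨Finset.filter_subset _ _, fun hsub => ?_⟩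
    have := Finset.mem_filter.mp (hsub (Finset.mem_univ i))
    exact rel_irrefl X i this.2
  have := Finset.card_lt_card h
  simpa [rnk] using this

lemma rnk_strictMono {n : ℕ} {X : Fin n → Fin n → Bool} (h : AcyclicSUT n X)
    {i j : Fin n} (hij : rel X i j) : rnk X i < rnk X j := by
  apply Finset.card_lt_card
  constructor
  · intro k hk
    simp only [Finset.mem_filter, Finset.mem_univ, true_and] at hk ⊢
    exact rel_trans h hk hij
  · intro hsub
    have hi : i ∈ Finset.univ.filter (fun k => rel X k j) := by
      simp [hij]
    have := Finset.mem_filter.mp (hsub hi)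
    exact rel_irrefl X i this.2

lemma realize {n : ℕ} (X : Fin n → Fin n → Bool) (h : AcyclicSUT n X) :
    ∃ τ : Equiv.Perm (Fin n), ∀ i j : Fin n, i < j → (X i j = true ↔ τ i < τ j) := by
  set g : Fin n → Fin n := fun i => ⟨rnk X i, rnk_lt X i⟩ with hg
  have hrelg : ∀ {i j : Fin n}, rel X i j → g i < g j := by
    intro i j hij
    simpa [hg, Fin.lt_def] using rnk_strictMono h hij
  have hinj : Function.Injective g := by
    intro i j hgij
    by_contra hne
    rcases rel_total X hne with hr | hr
    · exact absurd hgij (ne_of_lt (hrelg hr))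
    · exact absurd hgij.symm (ne_of_lt (hrelg hr))
  refine ⟨Equiv.ofBijective g (Finite.injective_iff_bijective.mp hinj), ?_⟩
  intro i j hij
  have happ : ∀ k, Equiv.ofBijective g (Finite.injective_iff_bijective.mp hinj) k = g k :=
    fun k => rfl
  rw [happ i, happ j]
  constructor
  · intro hx
    exact hrelg (Or.inl ⟨hij, hx⟩)
  · intro hlt
    rcases Bool.eq_false_or_eq_true (X i j) with hx | hx
    · exact hx
    · exact absurd hlt (asymm (hrelg (Or.inr ⟨hij, hx⟩)))

/-- The matrix of a permutation. -/
def matOf {n : ℕ} (τ : Equiv.Perm (Fin n)) : Fin n → Fin n → Bool :=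
  fun i j => decide (i < j ∧ τ i < τ j)

lemma matOf_rep {n : ℕ} (τ : Equiv.Perm (Fin n)) :
    ∀ i j : Fin n, i < j → (matOf τ i j = true ↔ τ i < τ j) := by
  intro i j hij; simp [matOf, hij]

lemma lt_of_not_lt {n : ℕ} (τ : Equiv.Perm (Fin n)) {i j : Fin n} (hne : i ≠ j)
    (h : ¬ τ i < τ j) : τ j < τ i := by
  rcases lt_or_ge (τ j) (τ i) with h' | h'
  · exact h'
  · exact absurd (lt_of_le_of_ne h' (fun e => hne (τ.injective e))) h

lemma matOf_acyc {n : ℕ} (τ : Equiv.Perm (Fin n)) : AcyclicSUT n (matOf τ) := by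
  constructor
  · intro i j hij; simp [matOf, hij]
  · intro i j k hij hjk
    rintro (⟨h1, h2, h3⟩ | ⟨h1, h2, h3⟩) <;>
      simp only [matOf, decide_eq_true_eq, decide_eq_false_iff_not, not_and] at h1 h2 h3
    · exact (h3 (hij.trans hjk)) (h1.2.trans h2.2)
    · have t1 := lt_of_not_lt τ (ne_of_lt hij) (h1 hij)
      have t2 := lt_of_not_lt τ (ne_of_lt hjk) (h2 hjk)
      exact absurd h3.2 (asymm (t2.trans t1))

lemma sum_map_sum {α β : Type*} (Ps : Multiset α) (s : Finset β) (g : α → β → ℤ) :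
    (Ps.map fun ρ => ∑ p ∈ s, g ρ p).sum = ∑ p ∈ s, (Ps.map fun ρ => g ρ p).sum := by
  induction Ps using Multiset.induction with
  | empty => simp
  | cons a t ih => simp [ih, Finset.sum_add_distrib]

lemma card_filter_int {α : Type*} (Ps : Multiset α) (q : α → Prop) [DecidablePred q] :
    ((Ps.filter q).card : ℤ) = (Ps.map fun ρ => if q ρ then (1:ℤ) else 0).sum := by
  induction Ps using Multiset.induction with
  | empty => simp
  | cons a t ih => by_cases h : q a <;> simp [h, ih, add_comm]

lemma KT_int (n : ℕ) (ρ τ : Equiv.Perm (Fin n)) :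
    (KTdist n ρ τ : ℤ) = ∑ p ∈ Finset.univ.filter (fun p : Fin n × Fin n => p.1 < p.2),
      (if ¬((ρ p.1 < ρ p.2) ↔ (τ p.1 < τ p.2)) then (1:ℤ) else 0) := by
  rw [KTdist, ← Finset.filter_filter, Finset.card_filter]
  push_cast
  rfl

lemma cost_eq (n : ℕ) (Ps : Multiset (Equiv.Perm (Fin n))) (τ : Equiv.Perm (Fin n))
    (X : Fin n → Fin n → Bool)
    (hrep : ∀ i j : Fin n, i < j → (X i j = true ↔ τ i < τ j)) :
    ((Ps.map fun ρ => KTdist n ρ τ).sum : ℤ)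
      = (∑ p ∈ Finset.univ.filter (fun p : Fin n × Fin n => p.1 < p.2),
          (wMat n Ps p.1 p.2 : ℤ)) + linCost n Ps X := by
  have hcast : ((Ps.map fun ρ => KTdist n ρ τ).sum : ℤ)
      = (Ps.map fun ρ => (KTdist n ρ τ : ℤ)).sum := by
    induction Ps using Multiset.induction with
    | empty => simp
    | cons a t ih => simp [ih]
  rw [hcast]
  have h1 : (Ps.map fun ρ => (KTdist n ρ τ : ℤ)).sum
      = ∑ p ∈ Finset.univ.filter (fun p : Fin n × Fin n => p.1 < p.2),
          (Ps.map fun ρ =>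
            if ¬((ρ p.1 < ρ p.2) ↔ (τ p.1 < τ p.2)) then (1:ℤ) else 0).sum := by
    rw [← sum_map_sum]
    congr 1
    exact Multiset.map_congr rfl (fun ρ _ => KT_int n ρ τ)
  rw [h1, linCost, ← Finset.sum_add_distrib]
  apply Finset.sum_congr rfl
  intro p hp
  have hlt : p.1 < p.2 := by simpa using (Finset.mem_filter.mp hp).2
  by_cases hτ : τ p.1 < τ p.2
  · have hx : X p.1 p.2 = true := (hrep _ _ hlt).mpr hτ
    have hmap : (Ps.map fun ρ =>
          if ¬((ρ p.1 < ρ p.2) ↔ (τ p.1 < τ p.2)) then (1:ℤ) else 0)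
        = Ps.map fun ρ => if ρ p.2 < ρ p.1 then (1:ℤ) else 0 := by
      apply Multiset.map_congr rfl
      intro ρ _
      by_cases hρ : ρ p.1 < ρ p.2
      · simp [hρ, hτ, asymm hρ]
      · simp [hρ, hτ, lt_of_not_lt ρ (ne_of_lt hlt) hρ]
    rw [hmap, ← card_filter_int]
    have : ((Ps.filter fun ρ => ρ p.2 < ρ p.1).card : ℤ) = (wMat n Ps p.2 p.1 : ℤ) := by
      rw [wMat]
    rw [this]
    simp [hx, biasMat]
  · have hx : X p.1 p.2 = false := by
      rcases Bool.eq_false_or_eq_true (X p.1 p.2) with h | h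
      · exact absurd ((hrep _ _ hlt).mp h) hτ
      · exact h
    have hmap : (Ps.map fun ρ =>
          if ¬((ρ p.1 < ρ p.2) ↔ (τ p.1 < τ p.2)) then (1:ℤ) else 0)
        = Ps.map fun ρ => if ρ p.1 < ρ p.2 then (1:ℤ) else 0 := by
      apply Multiset.map_congr rfl
      intro ρ _
      by_cases hρ : ρ p.1 < ρ p.2
      · simp [hρ, hτ]
      · simp [hρ, hτ]
    rw [hmap, ← card_filter_int]
    have : ((Ps.filter fun ρ => ρ p.1 < ρ p.2).card : ℤ) = (wMat n Ps p.1 p.2 : ℤ) := by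
      rw [wMat]
    rw [this]
    simp [hx]

end Stmt3Aux

/-- `σ₀`, represented by the acyclic matrix `X₀`, is a Kemeny ranking for the
multiset `Ps` iff `X₀` minimizes `C(X) = ∑_{i<j} b_{ij} x_{ij}` over all acyclic strictly
upper triangular binary matrices. -/
theorem stmt_3 (n : ℕ) (Ps : Multiset (Equiv.Perm (Fin n))) (σ₀ : Equiv.Perm (Fin n))
    (X₀ : Fin n → Fin n → Bool) (hacyc : AcyclicSUT n X₀)
    (hrep : ∀ i j : Fin n, i < j → (X₀ i j = true ↔ σ₀ i < σ₀ j)) :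
    (∀ τ : Equiv.Perm (Fin n),
        (Ps.map fun ρ => KTdist n ρ σ₀).sum ≤ (Ps.map fun ρ => KTdist n ρ τ).sum) ↔
    (∀ X : Fin n → Fin n → Bool, AcyclicSUT n X → linCost n Ps X₀ ≤ linCost n Ps X) := by
  have h0 := Stmt3Aux.cost_eq n Ps σ₀ X₀ hrep
  constructor
  · intro h X hX
    obtain ⟨τ, hrepX⟩ := Stmt3Aux.realize X hX
    have h1 := Stmt3Aux.cost_eq n Ps τ X hrepX
    have h2 : ((Ps.map fun ρ => KTdist n ρ σ₀).sum : ℤ)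
        ≤ ((Ps.map fun ρ => KTdist n ρ τ).sum : ℤ) := by exact_mod_cast h τ
    linarith
  · intro h τ
    have h1 := Stmt3Aux.cost_eq n Ps τ (Stmt3Aux.matOf τ) (Stmt3Aux.matOf_rep τ)
    have h2 := h (Stmt3Aux.matOf τ) (Stmt3Aux.matOf_acyc τ)
    have h3 : ((Ps.map fun ρ => KTdist n ρ σ₀).sum : ℤ)
        ≤ ((Ps.map fun ρ => KTdist n ρ τ).sum : ℤ) := by linarith
    exact_mod_cast h3
end

section
/- Let X be a strictly upper triangular n×n binary matrix. The penalty sum ∑_{i<j<k} (x_{ik} + x_{ij}x_{jk} - x_{ij}x_{ik} - x_{jk}x_{ik}) is always nonnegative, and it vanishes if and only if X is acyclic (i.e., X represents a ranking over a set of n candidates). -/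
/-- 0/1 integer value of a Bool matrix entry. -/
def bval (b : Bool) : ℤ := if b then 1 else 0

/-- Total penalty sum over all triples i < j < k. -/
def penaltySum (n : ℕ) (X : Fin n → Fin n → Bool) : ℤ :=
  ∑ t ∈ Finset.univ.filter (fun t : Fin n × Fin n × Fin n => t.1 < t.2.1 ∧ t.2.1 < t.2.2),
    (bval (X t.1 t.2.2) + bval (X t.1 t.2.1) * bval (X t.2.1 t.2.2)
      - bval (X t.1 t.2.1) * bval (X t.1 t.2.2)
      - bval (X t.2.1 t.2.2) * bval (X t.1 t.2.2))

lemma term_nonneg (a b c : Bool) :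
    0 ≤ bval c + bval a * bval b - bval a * bval c - bval b * bval c := by revert a b c; decide

lemma term_zero_iff (a b c : Bool) :
    bval c + bval a * bval b - bval a * bval c - bval b * bval c = 0 ↔
      ¬((a = true ∧ b = true ∧ c = false) ∨ (a = false ∧ b = false ∧ c = true)) := by
  revert a b c; decide

/-- the penalty sum of a strictly upper triangular binary matrix is
nonnegative, and vanishes iff the matrix is acyclic (no triple i < j < k in a
configuration (1,1,0) or (0,0,1)). -/
theorem stmt_5 (n : ℕ) (X : Fin n → Fin n → Bool)
    (hsut : ∀ i j : Fin n, ¬ i < j → X i j = false) :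
    0 ≤ penaltySum n X ∧
    (penaltySum n X = 0 ↔
      ∀ i j k : Fin n, i < j → j < k →
        ¬((X i j = true ∧ X j k = true ∧ X i k = false) ∨
          (X i j = false ∧ X j k = false ∧ X i k = true))) := by
  constructor
  · unfold penaltySum
    exact Finset.sum_nonneg fun t _ => term_nonneg _ _ _
  · unfold penaltySum
    rw [Finset.sum_eq_zero_iff_of_nonneg fun t _ => term_nonneg _ _ _]
    constructor
    · intro h i j k hij hjk
      have := h (i, j, k) (by simp [hij, hjk])
      exact (term_zero_iff _ _ _).mp this
    · intro h t ht
      simp only [Finset.mem_filter] at ht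
      exact (term_zero_iff _ _ _).mpr (h _ _ _ ht.2.1 ht.2.2)
end

section
/- If the bias matrix of a multiset Π of rankings admits no majority cycles—that is, the tournament defined by i → j whenever b_{ij} < 0 (c_i majority-preferred to c_j) is transitive and b_{ij} ≠ 0 for all i ≠ j—then the ranking π defined by this majority relation is the unique Kemeny ranking for Π. -/
namespace Stmt13Aux

variable {n : ℕ}

/-- The set of ordered pairs. -/
def pairs (n : ℕ) : Finset (Fin n × Fin n) := Finset.univ.filter (fun p => p.1 < p.2)

/-- Cost of a ranking at one pair. -/
def cost (Ps : Multiset (Equiv.Perm (Fin n))) (τ : Equiv.Perm (Fin n)) (p : Fin n × Fin n) : ℕ :=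
  if τ p.1 < τ p.2 then wMat n Ps p.2 p.1 else wMat n Ps p.1 p.2

lemma sum_map_ite (Ps : Multiset (Equiv.Perm (Fin n))) (c : Equiv.Perm (Fin n) → Prop)
    [DecidablePred c] :
    (Ps.map fun ρ => if c ρ then 1 else 0).sum = (Ps.filter c).card := by
  induction Ps using Multiset.induction with
  | empty => simp
  | cons ρ Ps ih =>
    by_cases h : c ρ <;> simp [Multiset.filter_cons, h, ih, Nat.add_comm]

lemma sum_map_finsetsum (Ps : Multiset (Equiv.Perm (Fin n))) (s : Finset (Fin n × Fin n))
    (f : Equiv.Perm (Fin n) → Fin n × Fin n → ℕ) :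
    (Ps.map fun ρ => ∑ p ∈ s, f ρ p).sum = ∑ p ∈ s, (Ps.map fun ρ => f ρ p).sum := by
  induction Ps using Multiset.induction with
  | empty => simp
  | cons ρ Ps ih => simp [ih, Finset.sum_add_distrib]

lemma perm_lt_of_not_lt (ρ : Equiv.Perm (Fin n)) {i j : Fin n} (hij : i ≠ j)
    (h : ¬ ρ i < ρ j) : ρ j < ρ i := by
  rcases lt_trichotomy (ρ i) (ρ j) with h1 | h1 | h1
  · exact absurd h1 h
  · exact absurd (ρ.injective h1) hij
  · exact h1

lemma total_cost (Ps : Multiset (Equiv.Perm (Fin n))) (τ : Equiv.Perm (Fin n)) :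
    (Ps.map fun ρ => KTdist n ρ τ).sum = ∑ p ∈ pairs n, cost Ps τ p := by
  have hKT : ∀ ρ : Equiv.Perm (Fin n), KTdist n ρ τ =
      ∑ p ∈ pairs n, (if ¬((ρ p.1 < ρ p.2) ↔ (τ p.1 < τ p.2)) then 1 else 0) := by
    intro ρ
    rw [KTdist, ← Finset.filter_filter]
    exact Finset.card_filter _ _
  calc (Ps.map fun ρ => KTdist n ρ τ).sum
      = (Ps.map fun ρ => ∑ p ∈ pairs n,
          (if ¬((ρ p.1 < ρ p.2) ↔ (τ p.1 < τ p.2)) then 1 else 0)).sum := by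
        congr 1; exact Multiset.map_congr rfl (fun ρ _ => hKT ρ)
    _ = ∑ p ∈ pairs n, (Ps.map fun ρ =>
          (if ¬((ρ p.1 < ρ p.2) ↔ (τ p.1 < τ p.2)) then 1 else 0)).sum :=
        sum_map_finsetsum _ _ _
    _ = ∑ p ∈ pairs n, cost Ps τ p := by
        refine Finset.sum_congr rfl (fun p hp => ?_)
        have hlt : p.1 < p.2 := by simpa [pairs] using hp
        have hne : p.1 ≠ p.2 := ne_of_lt hlt
        rw [sum_map_ite]
        by_cases hτ : τ p.1 < τ p.2
        · have : ∀ ρ : Equiv.Perm (Fin n),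
              (¬((ρ p.1 < ρ p.2) ↔ (τ p.1 < τ p.2))) ↔ ρ p.2 < ρ p.1 := by
            intro ρ
            constructor
            · intro h
              exact perm_lt_of_not_lt ρ hne (fun hl => h (iff_of_true hl hτ))
            · intro h hiff
              exact absurd (hiff.mpr hτ) (asymm h)
          rw [Multiset.filter_congr (fun ρ _ => this ρ)]
          simp [cost, hτ, wMat]
        · have : ∀ ρ : Equiv.Perm (Fin n),
              (¬((ρ p.1 < ρ p.2) ↔ (τ p.1 < τ p.2))) ↔ ρ p.1 < ρ p.2 := by
            intro ρ
            constructor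
            · intro h
              by_contra hl
              exact h (iff_of_false hl hτ)
            · intro h hiff
              exact hτ (hiff.mp h)
          rw [Multiset.filter_congr (fun ρ _ => this ρ)]
          simp [cost, hτ, wMat]

end Stmt13Aux

open Stmt13Aux in
/-- if all majority preferences are strict (`w_{ij} ≠ w_{ji}` for i ≠ j) and
the strict majority tournament is transitive, then the ranking defined by the majority
relation exists and is the unique Kemeny ranking for `Ps`. -/
theorem stmt_13 (n : ℕ) (Ps : Multiset (Equiv.Perm (Fin n)))
    (hne : ∀ i j : Fin n, i ≠ j → wMat n Ps i j ≠ wMat n Ps j i)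
    (htrans : ∀ i j k : Fin n,
      wMat n Ps i j > wMat n Ps j i → wMat n Ps j k > wMat n Ps k j →
        wMat n Ps i k > wMat n Ps k i) :
    ∃ σ : Equiv.Perm (Fin n),
      (∀ i j : Fin n, i ≠ j → (σ i < σ j ↔ wMat n Ps i j > wMat n Ps j i)) ∧
      (∀ τ : Equiv.Perm (Fin n), τ ≠ σ →
        (Ps.map fun ρ => KTdist n ρ σ).sum < (Ps.map fun ρ => KTdist n ρ τ).sum) := by
  classical
  set r : Fin n → Fin n → Prop := fun i j => wMat n Ps i j > wMat n Ps j i with hr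
  have hirr : ∀ i, ¬ r i i := fun i h => lt_irrefl _ h
  have htri : ∀ i j, i ≠ j → r i j ∨ r j i := by
    intro i j hij
    rcases lt_trichotomy (wMat n Ps i j) (wMat n Ps j i) with h | h | h
    · exact Or.inr h
    · exact absurd h (hne i j hij)
    · exact Or.inl h
  -- rank function
  set rk : Fin n → ℕ := fun i => (Finset.univ.filter (fun j => r j i)).card with hrk
  have hrk_mono : ∀ i j, r i j → rk i < rk j := by
    intro i j hij
    apply Finset.card_lt_card
    constructor
    · intro k hk
      simp only [Finset.mem_filter, Finset.mem_univ, true_and] at hk ⊢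
      exact htrans k i j hk hij
    · intro hsub
      have : i ∈ Finset.univ.filter (fun k => r k j) := by
        simp only [Finset.mem_filter, Finset.mem_univ, true_and]; exact hij
      have := hsub this
      simp only [Finset.mem_filter, Finset.mem_univ, true_and] at this
      exact hirr i this
  have hrk_lt : ∀ i, rk i < n := by
    intro i
    have : (Finset.univ.filter (fun j => r j i)).card < (Finset.univ : Finset (Fin n)).card := by
      apply Finset.card_lt_card
      refine ⟨Finset.filter_subset _ _, fun h => ?_⟩
      have := h (Finset.mem_univ i)
      simp only [Finset.mem_filter, Finset.mem_univ, true_and] at this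
      exact hirr i this
    simpa using this
  set f : Fin n → Fin n := fun i => ⟨rk i, hrk_lt i⟩ with hf
  have hinj : Function.Injective f := by
    intro i j h
    by_contra hij
    rcases htri i j hij with h' | h'
    · exact absurd (Fin.mk_eq_mk.mp h) (ne_of_lt (hrk_mono i j h'))
    · exact absurd (Fin.mk_eq_mk.mp h).symm (ne_of_lt (hrk_mono j i h'))
  have hbij : Function.Bijective f := Finite.injective_iff_bijective.mp hinj
  set σ : Equiv.Perm (Fin n) := Equiv.ofBijective f hbij with hσdef
  have hσf : ∀ i, σ i = f i := fun i => rfl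
  have hσ : ∀ i j : Fin n, i ≠ j → (σ i < σ j ↔ r i j) := by
    intro i j hij
    constructor
    · intro h
      by_contra h'
      rcases htri i j hij with h'' | h''
      · exact h' h''
      · have := hrk_mono j i h''
        rw [hσf, hσf] at h
        exact absurd h (not_lt.mpr (le_of_lt (by exact this)))
    · intro h
      rw [hσf, hσf]
      exact hrk_mono i j h
  refine ⟨σ, hσ, fun τ hτ => ?_⟩
  rw [total_cost, total_cost]
  -- the minimal cost property of σ per pair
  have hle : ∀ p ∈ pairs n, cost Ps σ p ≤ cost Ps τ p := by
    intro p hp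
    have hlt : p.1 < p.2 := by simpa [pairs] using hp
    have hne12 : p.1 ≠ p.2 := ne_of_lt hlt
    by_cases hs : σ p.1 < σ p.2
    · have hw : r p.1 p.2 := (hσ p.1 p.2 hne12).mp hs
      by_cases ht : τ p.1 < τ p.2
      · simp [cost, hs, ht]
      · simp only [cost, if_pos hs, if_neg ht]
        exact le_of_lt hw
    · have hs' : σ p.2 < σ p.1 := perm_lt_of_not_lt σ hne12 hs
      have hw : r p.2 p.1 := (hσ p.2 p.1 (Ne.symm hne12)).mp hs'
      by_cases ht : τ p.1 < τ p.2
      · simp only [cost, if_neg hs, if_pos ht]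
        exact le_of_lt hw
      · simp [cost, hs, ht]
  -- find a pair where τ and σ differ
  have hdiff : ∃ p ∈ pairs n, ¬((τ p.1 < τ p.2) ↔ (σ p.1 < σ p.2)) := by
    by_contra hcon
    push_neg at hcon
    have hall : ∀ i j : Fin n, σ i < σ j → τ i < τ j := by
      intro i j h
      have hij : i ≠ j := fun he => by subst he; exact lt_irrefl _ h
      rcases lt_trichotomy i j with hlt | he | hgt
      · exact (hcon (i, j) (by simp [pairs, hlt])).mpr h
      · exact absurd he hij
      · have := hcon (j, i) (by simp [pairs, hgt])
        have hns : ¬ σ j < σ i := asymm h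
        have hnt : ¬ τ j < τ i := fun h' => hns (this.mp h')
        exact perm_lt_of_not_lt τ (Ne.symm hij) hnt
    -- τ ∘ σ⁻¹ is strictly monotone, hence identity
    set e : Equiv.Perm (Fin n) := σ.symm.trans τ with he
    have hmono : StrictMono e := by
      intro a b hab
      have : σ (σ.symm a) < σ (σ.symm b) := by simpa using hab
      exact hall _ _ this
    have : τ = σ := by
      have huniq : StrictMono.orderIsoOfSurjective (e : Fin n → Fin n) hmono e.surjective
          = OrderIso.refl (Fin n) := Subsingleton.elim _ _
      apply Equiv.ext; intro i
      have h1 : e (σ i) = σ i := by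
        rw [← StrictMono.coe_orderIsoOfSurjective (e : Fin n → Fin n) hmono e.surjective,
          huniq]
        rfl
      simpa [he] using h1
    exact hτ this
  obtain ⟨p, hp, hpd⟩ := hdiff
  apply Finset.sum_lt_sum hle
  refine ⟨p, hp, ?_⟩
  have hlt : p.1 < p.2 := by simpa [pairs] using hp
  have hne12 : p.1 ≠ p.2 := ne_of_lt hlt
  by_cases hs : σ p.1 < σ p.2
  · have hw : r p.1 p.2 := (hσ p.1 p.2 hne12).mp hs
    have ht : ¬ τ p.1 < τ p.2 := fun h => hpd (iff_of_true h hs)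
    simp only [cost, if_pos hs, if_neg ht]
    exact hw
  · have hs' : σ p.2 < σ p.1 := perm_lt_of_not_lt σ hne12 hs
    have hw : r p.2 p.1 := (hσ p.2 p.1 (Ne.symm hne12)).mp hs'
    have ht : τ p.1 < τ p.2 := by
      by_contra h
      exact hpd (iff_of_false h hs)
    simp only [cost, if_neg hs, if_pos ht]
    exact hw
end
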